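/- arXiv:1704.00404 — 5 statements merged into one kernel-verified Lean document; each statement's English description precedes it below -/
import Mathlib

section
/- Let N be a positive integer, a_i nonzero real numbers and b_i real numbers for i=1,...,N, and let λ_j, λ_k, χ_{j,s}, χ_{k,l} be complex numbers with χ_{j,s} ≠ -b_i and χ_{k,l} ≠ -b_i for all i. If χ_{j,s} - λ_j - Σ_{i=1}^N a_i²/(χ_{j,s}+b_i) = 0 and χ_{k,l} - λ_k - Σ_{i=1}^N a_i²/(χ_{k,l}+b_i) = 0, and moreover conj(χ_{k,l}) ≠ χ_{j,s}, then (conj(λ_k) - λ_j)/(conj(χ_{k,l}) - χ_{j,s}) = 1 + Σ_{i=1}^N a_i²/((χ_{j,s}+b_i)(conj(χ_{k,l})+b_i)). -/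
open Complex

theorem prop1_darboux_identity
    (N : ℕ) (hN : 0 < N) (a b : Fin N → ℝ) (ha : ∀ i, a i ≠ 0)
    (lamj lamk χjs χkl : ℂ)
    (hjs : ∀ i, χjs ≠ -(b i : ℂ)) (hkl : ∀ i, χkl ≠ -(b i : ℂ))
    (h1 : χjs - lamj - ∑ i, (a i : ℂ)^2 / (χjs + (b i : ℂ)) = 0)
    (h2 : χkl - lamk - ∑ i, (a i : ℂ)^2 / (χkl + (b i : ℂ)) = 0)
    (hne : (starRingEnd ℂ) χkl ≠ χjs) :
    ((starRingEnd ℂ) lamk - lamj) / ((starRingEnd ℂ) χkl - χjs) =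
      1 + ∑ i, (a i : ℂ)^2 / ((χjs + (b i : ℂ)) * ((starRingEnd ℂ) χkl + (b i : ℂ))) := by
  set c : ℂ := (starRingEnd ℂ) χkl with hc
  have hd : c - χjs ≠ 0 := sub_ne_zero.mpr hne
  have hjs' : ∀ i, χjs + (b i : ℂ) ≠ 0 := by
    intro i h
    exact hjs i (by linear_combination h)
  have hkl' : ∀ i, c + (b i : ℂ) ≠ 0 := by
    intro i h
    apply hkl i
    have : (starRingEnd ℂ) (c + (b i : ℂ)) = 0 := by rw [h]; simp
    simp only [map_add, hc, RingHomCompTriple.comp_apply, RingHom.id_apply,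
      Complex.conj_conj, Complex.conj_ofReal] at this
    linear_combination this
  -- conjugate of h2
  have h2' : c - (starRingEnd ℂ) lamk - ∑ i, (a i : ℂ)^2 / (c + (b i : ℂ)) = 0 := by
    have := congrArg (starRingEnd ℂ) h2
    simpa [map_sum, map_sub, map_div₀, map_pow, Complex.conj_ofReal] using this
  have key : (starRingEnd ℂ) lamk - lamj =
      (c - χjs) * (1 + ∑ i, (a i : ℂ)^2 / ((χjs + (b i : ℂ)) * (c + (b i : ℂ)))) := by
    have e1 : lamj = χjs - ∑ i, (a i : ℂ)^2 / (χjs + (b i : ℂ)) := by linear_combination -h1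
    have e2 : (starRingEnd ℂ) lamk = c - ∑ i, (a i : ℂ)^2 / (c + (b i : ℂ)) := by
      linear_combination -h2'
    rw [e1, e2, mul_add, mul_one, Finset.mul_sum]
    have : ∀ i ∈ Finset.univ, (a i : ℂ)^2 / (χjs + (b i : ℂ)) - (a i : ℂ)^2 / (c + (b i : ℂ)) =
        (c - χjs) * ((a i : ℂ)^2 / ((χjs + (b i : ℂ)) * (c + (b i : ℂ)))) := by
      intro i _
      rw [div_sub_div _ _ (hjs' i) (hkl' i), mul_div_assoc']
      congr 1
      ring
    have hsum : ∑ i, (a i : ℂ)^2 / (χjs + (b i : ℂ)) - ∑ i, (a i : ℂ)^2 / (c + (b i : ℂ)) =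
        ∑ i, (c - χjs) * ((a i : ℂ)^2 / ((χjs + (b i : ℂ)) * (c + (b i : ℂ)))) := by
      rw [← Finset.sum_sub_distrib]
      exact Finset.sum_congr rfl this
    linear_combination hsum
  rw [key, mul_div_assoc, mul_comm, div_mul_cancel₀ _ hd]
end

section
/- Let a₁ = a₂ = 1, b₁ = β, b₂ = -β with β a real number, and let α be a complex number. Then the complex numbers χ_{1,±} = -α/2 ± (1/2)√(α² + 4β² - 4 + 4√((α²-4)β² + 1)) and χ_{2,±} = -α/2 ± (1/2)√(α² + 4β² - 4 - 4√((α²-4)β² + 1)) are exactly the four roots of the quartic equation obtained by clearing denominators in 1 + 1/((χ+β)(χ+α+β)) + 1/((χ-β)(χ+α-β)) = 0, i.e., of (χ+β)(χ+α+β)(χ-β)(χ+α-β) + (χ-β)(χ+α-β) + (χ+β)(χ+α+β) = 0. -/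
open Complex

/-- The quartic obtained by clearing denominators in
`1 + 1/((χ+β)(χ+α+β)) + 1/((χ-β)(χ+α-β)) = 0`. -/
noncomputable def ABquartic (α : ℂ) (β : ℝ) (χ : ℂ) : ℂ :=
  (χ + β) * (χ + α + β) * (χ - β) * (χ + α - β)
    + (χ - β) * (χ + α - β) + (χ + β) * (χ + α + β)

lemma AB_factor (β : ℝ) (α : ℂ)
    (s : ℂ) (hs : s ^ 2 = (α ^ 2 - 4) * (β : ℂ) ^ 2 + 1)
    (s₁ : ℂ) (hs₁ : s₁ ^ 2 = α ^ 2 + 4 * (β : ℂ) ^ 2 - 4 + 4 * s)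
    (s₂ : ℂ) (hs₂ : s₂ ^ 2 = α ^ 2 + 4 * (β : ℂ) ^ 2 - 4 - 4 * s)
    (χ : ℂ) :
    ABquartic α β χ =
      (χ - (-α / 2 + s₁ / 2)) * (χ - (-α / 2 - s₁ / 2)) *
      (χ - (-α / 2 + s₂ / 2)) * (χ - (-α / 2 - s₂ / 2)) := by
  unfold ABquartic
  linear_combination (((χ + α / 2) ^ 2) / 4 - s₂ ^ 2 / 16) * hs₁ +
    (((χ + α / 2) ^ 2) / 4 - (α ^ 2 + 4 * (β : ℂ) ^ 2 - 4 + 4 * s) / 16) * hs₂ + hs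

theorem AB_quartic_roots (β : ℝ) (α : ℂ)
    (s : ℂ) (hs : s ^ 2 = (α ^ 2 - 4) * (β : ℂ) ^ 2 + 1)
    (s₁ : ℂ) (hs₁ : s₁ ^ 2 = α ^ 2 + 4 * (β : ℂ) ^ 2 - 4 + 4 * s)
    (s₂ : ℂ) (hs₂ : s₂ ^ 2 = α ^ 2 + 4 * (β : ℂ) ^ 2 - 4 - 4 * s) :
    (ABquartic α β (-α / 2 + s₁ / 2) = 0 ∧
     ABquartic α β (-α / 2 - s₁ / 2) = 0 ∧
     ABquartic α β (-α / 2 + s₂ / 2) = 0 ∧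
     ABquartic α β (-α / 2 - s₂ / 2) = 0) ∧
    ∀ χ : ℂ, ABquartic α β χ = 0 →
      χ = -α / 2 + s₁ / 2 ∨ χ = -α / 2 - s₁ / 2 ∨
      χ = -α / 2 + s₂ / 2 ∨ χ = -α / 2 - s₂ / 2 := by
  have key := AB_factor β α s hs s₁ hs₁ s₂ hs₂
  constructor
  · refine ⟨?_, ?_, ?_, ?_⟩ <;> rw [key] <;> ring
  · intro χ hχ
    rw [key χ] at hχ
    rcases mul_eq_zero.1 hχ with h | h
    · rcases mul_eq_zero.1 h with h | h
      · rcases mul_eq_zero.1 h with h | h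
        · exact Or.inl (by linear_combination h)
        · exact Or.inr (Or.inl (by linear_combination h))
      · exact Or.inr (Or.inr (Or.inl (by linear_combination h)))
    · exact Or.inr (Or.inr (Or.inr (by linear_combination h)))
end

section
/- Let β > 0 be a real number and α a real number with |α| > 2β. Then the quartic polynomial P(χ) = (χ+β)(χ+α+β)(χ-β)(χ+α-β) + (χ-β)(χ+α-β) + (χ+β)(χ+α+β) has at least two real roots: one in the open interval (-β, β) and one in the open interval (-(β+α), β-α) (interpreted as the interval between the two endpoints). -/
/-- The cleared-denominator quartic for the two-component AB condition, real version. -/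
def ABquarticR (α β χ : ℝ) : ℝ :=
  (χ + β) * (χ + α + β) * (χ - β) * (χ + α - β)
    + (χ - β) * (χ + α - β) + (χ + β) * (χ + α + β)

lemma AB_cont (α β : ℝ) : Continuous (ABquarticR α β) := by
  unfold ABquarticR; continuity

lemma AB_sign_root (α β a b : ℝ) (hab : a < b)
    (h : ABquarticR α β a * ABquarticR α β b < 0) :
    ∃ χ ∈ Set.Ioo a b, ABquarticR α β χ = 0 := by
  rcases mul_neg_iff.mp h with ⟨ha, hb⟩ | ⟨ha, hb⟩
  · have := intermediate_value_Ioo' hab.le ((AB_cont α β).continuousOn)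
      (Set.mem_Ioo.mpr ⟨hb, ha⟩)
    rcases this with ⟨x, hx, hx0⟩
    exact ⟨x, hx, hx0⟩
  · have := intermediate_value_Ioo hab.le ((AB_cont α β).continuousOn)
      (Set.mem_Ioo.mpr ⟨ha, hb⟩)
    rcases this with ⟨x, hx, hx0⟩
    exact ⟨x, hx, hx0⟩

theorem AB_quartic_real_roots (β α : ℝ) (hβ : 0 < β) (hα : 2 * β < |α|) :
    (∃ χ ∈ Set.Ioo (-β) β, ABquarticR α β χ = 0) ∧
    (∃ χ ∈ Set.Ioo (min (-(β + α)) (β - α)) (max (-(β + α)) (β - α)),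
      ABquarticR α β χ = 0) := by
  have hα2 : 4 * β ^ 2 < α ^ 2 := by
    have h0 : (0:ℝ) ≤ 2 * β := by linarith
    have := mul_self_lt_mul_self h0 hα
    rw [abs_mul_abs_self] at this
    nlinarith
  constructor
  · apply AB_sign_root α β (-β) β (by linarith)
    have : ABquarticR α β (-β) * ABquarticR α β β
        = -(4 * β ^ 2) * (α ^ 2 - 4 * β ^ 2) := by
      unfold ABquarticR; ring
    rw [this]
    nlinarith [mul_pos (show (0:ℝ) < 4 * β ^ 2 by positivity) (show (0:ℝ) < α ^ 2 - 4 * β ^ 2 by linarith)]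
  · have hmin : min (-(β + α)) (β - α) = -(β + α) := min_eq_left (by linarith)
    have hmax : max (-(β + α)) (β - α) = β - α := max_eq_right (by linarith)
    rw [hmin, hmax]
    apply AB_sign_root α β (-(β + α)) (β - α) (by linarith)
    have : ABquarticR α β (-(β + α)) * ABquarticR α β (β - α)
        = 4 * β ^ 2 * (4 * β ^ 2 - α ^ 2) := by
      unfold ABquarticR; ring
    rw [this]
    nlinarith [mul_pos (show (0:ℝ) < 4 * β ^ 2 by positivity) (show (0:ℝ) < α ^ 2 - 4 * β ^ 2 by linarith)]
end

section
/- Let 0 < β < 1/2 and let α be a real number with 0 < |α| < 2β. Then (α² - 4)β² + 1 > 0 and α² + 4β² - 4 + 4√((α²-4)β²+1) < 0; consequently χ_{1,±} = -α/2 ± (1/2)√(α² + 4β² - 4 + 4√((α²-4)β²+1)) form a pair of non-real complex conjugate numbers. -/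
open Complex

theorem chi1_complex_conjugate_pair (β α : ℝ)
    (hβ0 : 0 < β) (hβ : β < 1 / 2) (hα0 : 0 < |α|) (hα : |α| < 2 * β) :
    (α ^ 2 - 4) * β ^ 2 + 1 > 0 ∧
    α ^ 2 + 4 * β ^ 2 - 4 + 4 * Real.sqrt ((α ^ 2 - 4) * β ^ 2 + 1) < 0 ∧
    (let E : ℝ := α ^ 2 + 4 * β ^ 2 - 4 + 4 * Real.sqrt ((α ^ 2 - 4) * β ^ 2 + 1)
     let χp : ℂ := -(α : ℂ) / 2 + (1 / 2) * (Real.sqrt (-E) : ℂ) * Complex.I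
     let χm : ℂ := -(α : ℂ) / 2 - (1 / 2) * (Real.sqrt (-E) : ℂ) * Complex.I
     χm = (starRingEnd ℂ) χp ∧ χp.im ≠ 0) := by
  have hα2 : α ^ 2 < (2 * β) ^ 2 := by
    have := _root_.sq_abs α
    nlinarith [sq_nonneg α, abs_nonneg α]
  have h1 : (α ^ 2 - 4) * β ^ 2 + 1 > 0 := by nlinarith [sq_nonneg α, sq_nonneg β]
  have ht : (0:ℝ) < (4 - α ^ 2 - 4 * β ^ 2) / 4 := by nlinarith
  have hsq : Real.sqrt ((α ^ 2 - 4) * β ^ 2 + 1) < (4 - α ^ 2 - 4 * β ^ 2) / 4 := by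
    rw [show (4 - α ^ 2 - 4 * β ^ 2) / 4 = Real.sqrt (((4 - α ^ 2 - 4 * β ^ 2) / 4) ^ 2) by
      rw [Real.sqrt_sq ht.le]]
    apply Real.sqrt_lt_sqrt h1.le
    nlinarith [sq_nonneg (α ^ 2 - 4 * β ^ 2)]
  have h2 : α ^ 2 + 4 * β ^ 2 - 4 + 4 * Real.sqrt ((α ^ 2 - 4) * β ^ 2 + 1) < 0 := by
    nlinarith
  refine ⟨h1, h2, ?_, ?_⟩
  · simp only [map_add, map_mul, map_div₀, map_neg, map_one, map_ofNat,
      Complex.conj_ofReal, Complex.conj_I]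
    ring
  · have hpos : 0 < Real.sqrt (-(α ^ 2 + 4 * β ^ 2 - 4 +
        4 * Real.sqrt ((α ^ 2 - 4) * β ^ 2 + 1))) :=
      Real.sqrt_pos.mpr (by linarith)
    have him : (-(α:ℂ) / 2 + (1 / 2) * ((Real.sqrt (-(α ^ 2 + 4 * β ^ 2 - 4 +
        4 * Real.sqrt ((α ^ 2 - 4) * β ^ 2 + 1))) : ℝ) : ℂ) * Complex.I).im =
        Real.sqrt (-(α ^ 2 + 4 * β ^ 2 - 4 + 4 * Real.sqrt ((α ^ 2 - 4) * β ^ 2 + 1))) / 2 := by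
      simp; ring
    rw [him]
    positivity
end

section
/- Let α be a real number with 0 < |α| < √3 and set β = (1/2)√(1+α²), a₁ = a₂ = 1, b₁ = β, b₂ = -β. Then there exists a complex number χ with nonzero imaginary part such that χ, χ+α, and χ+2α all satisfy the same characteristic equation z - λ - 1/(z+β) - 1/(z-β) = 0 for a common complex λ; equivalently, both 1 + 1/((χ+β)(χ+α+β)) + 1/((χ-β)(χ+α-β)) = 0 and 1 + 1/((χ+α+β)(χ+2α+β)) + 1/((χ+α-β)(χ+2α-β)) = 0 hold. -/
open Complex

theorem triple_root_configuration_exists (α : ℝ)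
    (hα0 : 0 < |α|) (hα : |α| < Real.sqrt 3) :
    let β : ℝ := (1 / 2) * Real.sqrt (1 + α ^ 2)
    ∃ χ : ℂ, χ.im ≠ 0 ∧
      (∃ lam : ℂ, ∀ z ∈ ({χ, χ + (α : ℂ), χ + 2 * (α : ℂ)} : Set ℂ),
        z - lam - 1 / (z + (β : ℂ)) - 1 / (z - (β : ℂ)) = 0) ∧
      (1 + 1 / ((χ + (β : ℂ)) * (χ + (α : ℂ) + (β : ℂ)))
         + 1 / ((χ - (β : ℂ)) * (χ + (α : ℂ) - (β : ℂ))) = 0) ∧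
      (1 + 1 / ((χ + (α : ℂ) + (β : ℂ)) * (χ + 2 * (α : ℂ) + (β : ℂ)))
         + 1 / ((χ + (α : ℂ) - (β : ℂ)) * (χ + 2 * (α : ℂ) - (β : ℂ))) = 0) := by
  intro β
  have hα2 : α ^ 2 < 3 := by
    nlinarith [_root_.sq_abs α, Real.sq_sqrt (by norm_num : (3:ℝ) ≥ 0),
      mul_self_lt_mul_self (abs_nonneg α) hα]
  set tr : ℝ := Real.sqrt (3 - α ^ 2) / 2 with htr
  have htrpos : 0 < tr := by
    have : 0 < Real.sqrt (3 - α ^ 2) := Real.sqrt_pos.mpr (by linarith)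
    positivity
  have htr2 : tr ^ 2 = (3 - α ^ 2) / 4 := by
    rw [htr, div_pow, Real.sq_sqrt (by linarith)]; ring
  have hβ2 : β ^ 2 = (1 + α ^ 2) / 4 := by
    show ((1 / 2) * Real.sqrt (1 + α ^ 2)) ^ 2 = (1 + α ^ 2) / 4
    rw [mul_pow, Real.sq_sqrt (by positivity)]; ring
  set b : ℂ := (β : ℂ) with hbdef
  set t : ℂ := (tr : ℂ) with htdef
  have hb : b ^ 2 = (1 + (α:ℂ) ^ 2) / 4 := by
    rw [hbdef, ← Complex.ofReal_pow, hβ2]; push_cast; ring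
  have ht : t ^ 2 = (3 - (α:ℂ) ^ 2) / 4 := by
    rw [htdef, ← Complex.ofReal_pow, htr2]; push_cast; ring
  have hI : Complex.I ^ 2 = -1 := Complex.I_sq
  set χ : ℂ := -(α : ℂ) + t * Complex.I with hχ
  have him : ∀ r : ℝ, (χ + (r : ℂ)).im = tr := by
    intro r
    simp [hχ, htdef, Complex.add_im, Complex.mul_im]
  have hne : ∀ r : ℝ, χ + (r : ℂ) ≠ 0 := by
    intro r h
    have h2 := him r
    rw [h] at h2
    simp at h2
    exact htrpos.ne h2
  have hβp : ∀ r : ℝ, χ + (r : ℂ) + b ≠ 0 := by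
    intro r
    have h2 : χ + (r : ℂ) + b = χ + ((r + β : ℝ) : ℂ) := by push_cast [hbdef]; ring
    rw [h2]; exact hne _
  have hβm : ∀ r : ℝ, χ + (r : ℂ) - b ≠ 0 := by
    intro r
    have h2 : χ + (r : ℂ) - b = χ + ((r - β : ℝ) : ℂ) := by push_cast [hbdef]; ring
    rw [h2]; exact hne _
  have h0p : χ + b ≠ 0 := by have := hβp 0; simpa using this
  have h0m : χ - b ≠ 0 := by have := hβm 0; simpa using this
  have h1p : χ + (α:ℂ) + b ≠ 0 := hβp α
  have h1m : χ + (α:ℂ) - b ≠ 0 := hβm α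
  have h2p : χ + 2 * (α:ℂ) + b ≠ 0 := by
    have h2 : χ + 2 * (α:ℂ) + b = χ + ((2 * α : ℝ) : ℂ) + b := by push_cast; ring
    rw [h2]; exact hβp _
  have h2m : χ + 2 * (α:ℂ) - b ≠ 0 := by
    have h2 : χ + 2 * (α:ℂ) - b = χ + ((2 * α : ℝ) : ℂ) - b := by push_cast; ring
    rw [h2]; exact hβm _
  refine ⟨χ, ?_, ?_, ?_, ?_⟩
  · have h2 := him 0; simp at h2; rw [h2]; exact htrpos.ne'
  · refine ⟨3 * t * Complex.I, ?_⟩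
    have key : ∀ w : ℂ, w + b ≠ 0 → w - b ≠ 0 →
        (w - 3 * t * Complex.I) * (w + b) * (w - b) - (w - b) - (w + b) = 0 →
        w - 3 * t * Complex.I - 1 / (w + b) - 1 / (w - b) = 0 := by
      intro w hp hq hnum
      have heq : w - 3 * t * Complex.I - 1 / (w + b) - 1 / (w - b) =
          ((w - 3 * t * Complex.I) * (w + b) * (w - b) - (w - b) - (w + b)) /
            ((w + b) * (w - b)) := by
        field_simp
      rw [heq, hnum, zero_div]
    intro z hz
    simp only [Set.mem_insert_iff, Set.mem_singleton_iff] at hz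
    rcases hz with rfl | rfl | rfl
    · refine key _ h0p h0m ?_
      rw [hχ]
      linear_combination (2*t*Complex.I + (α:ℂ)) * hb
        + (-2*t*Complex.I^3 + 3*(α:ℂ)*Complex.I^2) * ht
        + (-(3/2)*t*Complex.I + (9/4)*(α:ℂ) + (1/2)*(α:ℂ)^2*t*Complex.I
            - (3/4)*(α:ℂ)^3) * hI
    · refine key _ h1p h1m ?_
      rw [hχ]
      linear_combination (2*t*Complex.I) * hb + (-2*t*Complex.I^3) * ht
        + (-(3/2)*t*Complex.I + (1/2)*(α:ℂ)^2*t*Complex.I) * hI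
    · refine key _ h2p h2m ?_
      rw [hχ]
      linear_combination (2*t*Complex.I - (α:ℂ)) * hb
        + (-2*t*Complex.I^3 - 3*(α:ℂ)*Complex.I^2) * ht
        + (-(3/2)*t*Complex.I - (9/4)*(α:ℂ) + (1/2)*(α:ℂ)^2*t*Complex.I
            + (3/4)*(α:ℂ)^3) * hI
  · have hpq : (χ + b) * (χ + (α:ℂ) + b) ≠ 0 := mul_ne_zero h0p h1p
    have hrs : (χ - b) * (χ + (α:ℂ) - b) ≠ 0 := mul_ne_zero h0m h1m
    have heq : 1 + 1 / ((χ + b) * (χ + (α:ℂ) + b)) + 1 / ((χ - b) * (χ + (α:ℂ) - b)) =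
        ((χ + b) * (χ + (α:ℂ) + b) * ((χ - b) * (χ + (α:ℂ) - b))
          + (χ - b) * (χ + (α:ℂ) - b) + (χ + b) * (χ + (α:ℂ) + b)) /
          ((χ + b) * (χ + (α:ℂ) + b) * ((χ - b) * (χ + (α:ℂ) - b))) := by
      field_simp
    rw [heq]
    rw [div_eq_zero_iff]
    left
    rw [hχ]
    linear_combination ((9/4 : ℂ) - 2*t^2*Complex.I^2 + b^2 + 2*(α:ℂ)*t*Complex.I
        - (3/4)*(α:ℂ)^2) * hb
      + ((3/4 : ℂ)*Complex.I^2 + t^2*Complex.I^4 - 2*(α:ℂ)*t*Complex.I^3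
        + (3/4)*(α:ℂ)^2*Complex.I^2) * ht
      + ((9/16 : ℂ) + (3/4)*t^2*Complex.I^2 - (3/2)*(α:ℂ)*t*Complex.I
        + (3/8)*(α:ℂ)^2 - (1/4)*(α:ℂ)^2*t^2*Complex.I^2
        + (1/2)*(α:ℂ)^3*t*Complex.I - (3/16)*(α:ℂ)^4) * hI
  · have heq : 1 + 1 / ((χ + (α:ℂ) + b) * (χ + 2*(α:ℂ) + b))
        + 1 / ((χ + (α:ℂ) - b) * (χ + 2*(α:ℂ) - b)) =
        ((χ + (α:ℂ) + b) * (χ + 2*(α:ℂ) + b) * ((χ + (α:ℂ) - b) * (χ + 2*(α:ℂ) - b))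
          + (χ + (α:ℂ) - b) * (χ + 2*(α:ℂ) - b) + (χ + (α:ℂ) + b) * (χ + 2*(α:ℂ) + b)) /
          ((χ + (α:ℂ) + b) * (χ + 2*(α:ℂ) + b) * ((χ + (α:ℂ) - b) * (χ + 2*(α:ℂ) - b))) := by
      have hpq := mul_ne_zero h1p h2p
      have hrs := mul_ne_zero h1m h2m
      have key : ∀ A B : ℂ, A ≠ 0 → B ≠ 0 → 1 + 1/A + 1/B = (A*B + B + A)/(A*B) := by
        intro A B hA hB; field_simp
      exact key _ _ hpq hrs
    rw [heq]
    rw [div_eq_zero_iff]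
    left
    rw [hχ]
    linear_combination ((9/4 : ℂ) - 2*t^2*Complex.I^2 + b^2 - 2*(α:ℂ)*t*Complex.I
        - (3/4)*(α:ℂ)^2) * hb
      + ((3/4 : ℂ)*Complex.I^2 + t^2*Complex.I^4 + 2*(α:ℂ)*t*Complex.I^3
        + (3/4)*(α:ℂ)^2*Complex.I^2) * ht
      + ((9/16 : ℂ) + (3/4)*t^2*Complex.I^2 + (3/2)*(α:ℂ)*t*Complex.I
        + (3/8)*(α:ℂ)^2 - (1/4)*(α:ℂ)^2*t^2*Complex.I^2
        - (1/2)*(α:ℂ)^3*t*Complex.I - (3/16)*(α:ℂ)^4) * hI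
end
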